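/- Let p ∈ (1,∞), β < 0, and X(s) = cosh_p((-μ̃)^{1/p}s) with μ̃ < 0, satisfying the boundary condition X'(s₀) = |β|^{1/(p-1)}X(s₀). Then -μ̃/|β|^{p'} = 1/(1 - cosh_p((-μ̃)^{1/p}s₀)^{-p}), where p' = p/(p-1). -/
import Mathlib


open Real

theorem cosh_p_boundary_relation (p : ℝ) (hp : 1 < p) (β s₀ μ' : ℝ)
    (hβ : β < 0) (hs₀ : 0 < s₀) (hμ' : μ' < 0)
    (p' : ℝ) (hp' : p' = p / (p - 1))
    (arccoshp : ℝ → ℝ)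
    (harccosh : ∀ x, 1 ≤ x → arccoshp x = ∫ s in (1:ℝ)..x, (s ^ p - 1) ^ (-(1/p)))
    (coshp : ℝ → ℝ)
    (hcosh : ∀ t, 0 ≤ t → 1 ≤ coshp t ∧ arccoshp (coshp t) = t)
    (X X' : ℝ → ℝ)
    (hX : ∀ s, X s = coshp ((-μ') ^ (1/p) * s))
    (hX' : ∀ s ∈ Set.Icc 0 s₀, X' s = (-μ') ^ (1/p) * (X s ^ p - 1) ^ (1/p))
    (hbc : X' s₀ = |β| ^ (1/(p-1)) * X s₀) :
    -μ' / |β| ^ p' = 1 / (1 - (coshp ((-μ') ^ (1/p) * s₀)) ^ (-p)) := by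
  have hp0 : (0:ℝ) < p := lt_trans one_pos hp
  have hμpos : (0:ℝ) < -μ' := by linarith
  have hβpos : (0:ℝ) < |β| := abs_pos.mpr (ne_of_lt hβ)
  set c : ℝ := coshp ((-μ') ^ (1/p) * s₀) with hc_def
  have hc1 : 1 ≤ c := by
    apply (hcosh _ ?_).1
    positivity
  have hc0 : (0:ℝ) < c := lt_of_lt_of_le one_pos hc1
  have hcp1 : (1:ℝ) ≤ c ^ p := Real.one_le_rpow hc1 hp0.le
  -- boundary condition rewritten
  have key : (-μ') ^ (1/p) * (c ^ p - 1) ^ (1/p) = |β| ^ (1/(p-1)) * c := by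
    have h1 := hX' s₀ ⟨hs₀.le, le_refl _⟩
    rw [hX s₀] at h1
    rw [h1, hX s₀] at hbc
    exact hbc
  -- RHS positive, hence c^p - 1 > 0
  have hrhs : (0:ℝ) < |β| ^ (1/(p-1)) * c := by positivity
  have hcpgt : (1:ℝ) < c ^ p := by
    by_contra h
    have : c ^ p - 1 = 0 := le_antisymm (by linarith [not_lt.mp h]) (by linarith)
    rw [this, Real.zero_rpow (by positivity), mul_zero] at key
    linarith
  have hcpm : (0:ℝ) < c ^ p - 1 := by linarith
  -- raise to power p
  have keyp : (-μ') * (c ^ p - 1) = |β| ^ p' * c ^ p := by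
    have hl : ((-μ') ^ (1/p) * (c ^ p - 1) ^ (1/p)) ^ p = (-μ') * (c ^ p - 1) := by
      rw [Real.mul_rpow (by positivity) (by positivity),
        one_div, Real.rpow_inv_rpow hμpos.le (ne_of_gt hp0),
        Real.rpow_inv_rpow hcpm.le (ne_of_gt hp0)]
    have hr : (|β| ^ (1/(p-1)) * c) ^ p = |β| ^ p' * c ^ p := by
      rw [Real.mul_rpow (by positivity) hc0.le, ← Real.rpow_mul hβpos.le]
      congr 2
      rw [hp']
      field_simp
    rw [← hl, ← hr, key]
  have hβp' : (0:ℝ) < |β| ^ p' := by positivity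
  have hcp0 : (0:ℝ) < c ^ p := by linarith
  rw [Real.rpow_neg hc0.le]
  rw [div_eq_div_iff (ne_of_gt hβp') (by
    rw [sub_pos] at *
    intro h
    apply absurd h
    intro h
    have : (c ^ p)⁻¹ < 1 := inv_lt_one_of_one_lt₀ hcpgt
    linarith)]
  have hinv : (c ^ p)⁻¹ * (c ^ p) = 1 := inv_mul_cancel₀ (ne_of_gt hcp0)
  nlinarith [keyp]
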